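/- In the dual Yang-Mills algebra, the element g = g_{αβ} θ^α θ^β of degree 2 is central: for every generator θ^ν one has g·θ^ν = θ^ν·g. -/
import Mathlib

/-- In the dual Yang-Mills algebra, the element
`g = g_{αβ} θ^α θ^β` of degree 2 is central: `g·θ^ν = θ^ν·g` for every generator.
Formulated universally: in any unital associative ℂ-algebra with elements
`θ^0,…,θ^s` satisfying the defining relations of `A^!` (for an invertible
real symmetric matrix `g^{μν}` with inverse `g_{μν}`), the element `G` commutes
with every generator. -/
theorem dual_yang_mills_g_central (s : ℕ) (hs : 1 ≤ s)
    (g ginv : Matrix (Fin (s + 1)) (Fin (s + 1)) ℝ)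
    (hsymm : g.IsSymm) (hinv : g * ginv = 1) (hinv' : ginv * g = 1)
    (B : Type*) [Ring B] [Algebra ℂ B] (θ : Fin (s + 1) → B)
    (G : B) (hG : G = ∑ a, ∑ b, ((ginv a b : ℂ)) • (θ a * θ b))
    (hrel : ∀ l m n, θ l * θ m * θ n =
      ((1 : ℂ) / s) • (((g l m : ℂ)) • θ n + ((g m n : ℂ)) • θ l
        - (2 * (g l n : ℂ)) • θ m) * G) :
    ∀ n, G * θ n = θ n * G := by
  intro n
  have hs0 : (s : ℂ) ≠ 0 := Nat.cast_ne_zero.mpr (by omega)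
  have hsym : ∀ a b, g a b = g b a := fun a b => (Matrix.IsSymm.apply hsymm b a)
  have hginvg : ∀ a c, (∑ b, ginv a b * g b c) = if a = c then 1 else 0 := by
    intro a c
    have := congrFun (congrFun hinv' a) c
    simpa [Matrix.mul_apply, Matrix.one_apply] using this
  have hginvg' : ∀ c b, (∑ a, ginv a b * g a c) = if c = b then 1 else 0 := by
    intro c b
    have := congrFun (congrFun hinv c) b
    simp only [Matrix.mul_apply, Matrix.one_apply] at this
    calc (∑ a, ginv a b * g a c) = ∑ a, g c a * ginv a b := by
          refine Finset.sum_congr rfl fun a _ => ?_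
          rw [hsym a c]; ring
      _ = _ := this
  have htr : (∑ a, ∑ b, ginv a b * g a b) = (s + 1 : ℝ) := by
    have : ∀ a : Fin (s+1), (∑ b, ginv a b * g a b) = ∑ b, ginv a b * g b a := by
      intro a; exact Finset.sum_congr rfl fun b _ => by rw [hsym a b]
    rw [Finset.sum_congr rfl fun a _ => this a]
    rw [Finset.sum_congr rfl fun a _ => hginvg a a]
    simp
  have key : (∑ a, ∑ b, (ginv a b : ℂ) • (((g a b : ℂ)) • θ n + ((g b n : ℂ)) • θ a
      - (2 * (g a n : ℂ)) • θ b)) = (s : ℂ) • θ n := by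
    simp only [smul_add, smul_sub, smul_smul, Finset.sum_add_distrib, Finset.sum_sub_distrib]
    have t1 : (∑ a, ∑ b, ((ginv a b : ℂ) * (g a b : ℂ)) • θ n) = ((s : ℂ) + 1) • θ n := by
      simp only [← Finset.sum_smul]
      congr 1
      rw [show (∑ a, ∑ b, (ginv a b : ℂ) * (g a b : ℂ))
          = ((∑ a, ∑ b, ginv a b * g a b : ℝ) : ℂ) by push_cast; rfl, htr]
      push_cast; ring
    have t2 : (∑ a, ∑ b, ((ginv a b : ℂ) * (g b n : ℂ)) • θ a) = θ n := by
      have : ∀ a, (∑ b, ((ginv a b : ℂ) * (g b n : ℂ)) • θ a)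
          = ((if a = n then 1 else 0 : ℂ)) • θ a := by
        intro a
        rw [← Finset.sum_smul]
        congr 1
        rw [show (∑ b, (ginv a b : ℂ) * (g b n : ℂ)) = ((∑ b, ginv a b * g b n : ℝ) : ℂ) by
          push_cast; rfl, hginvg a n]
        split <;> simp
      rw [Finset.sum_congr rfl fun a _ => this a]
      simp
    have t3 : (∑ a, ∑ b, ((ginv a b : ℂ) * (2 * (g a n : ℂ))) • θ b) = (2 : ℂ) • θ n := by
      rw [Finset.sum_comm]
      have : ∀ b, (∑ a, ((ginv a b : ℂ) * (2 * (g a n : ℂ))) • θ b)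
          = ((2 : ℂ) * ((if n = b then 1 else 0 : ℝ) : ℂ)) • θ b := by
        intro b
        rw [← Finset.sum_smul]
        congr 1
        rw [show (∑ a, (ginv a b : ℂ) * (2 * (g a n : ℂ)))
            = (2 : ℂ) * ((∑ a, ginv a b * g a n : ℝ) : ℂ) by
          push_cast [Finset.mul_sum]
          exact Finset.sum_congr rfl fun a _ => by ring,
          hginvg' n b]
      rw [Finset.sum_congr rfl fun b _ => this b]
      simp [apply_ite (fun x : ℝ => (x : ℂ)), mul_ite, ite_smul]
    rw [t1, t2, t3]
    module
  calc G * θ n = ∑ a, ∑ b, (ginv a b : ℂ) • (θ a * θ b * θ n) := by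
        rw [hG, Finset.sum_mul]
        exact Finset.sum_congr rfl fun a _ => by
          rw [Finset.sum_mul]
          exact Finset.sum_congr rfl fun b _ => by rw [smul_mul_assoc, mul_assoc]
    _ = ((1 : ℂ) / s) • (∑ a, ∑ b, (ginv a b : ℂ) • (((g a b : ℂ)) • θ n
          + ((g b n : ℂ)) • θ a - (2 * (g a n : ℂ)) • θ b)) * G := by
        simp only [hrel, Finset.smul_sum, Finset.sum_mul, smul_mul_assoc, smul_smul]
        refine Finset.sum_congr rfl fun a _ => Finset.sum_congr rfl fun b _ => ?_
        ring_nf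
    _ = θ n * G := by
        rw [key, smul_smul, one_div, inv_mul_cancel₀ hs0, one_smul]
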